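/- Let h : ℝ → ℝ be twice continuously differentiable and periodic with period T > 0, with finitely many critical points in [0, T). Let y₀ = max h, and suppose y₀ is attained in [0, T) exactly at the points t₁, …, t_m, each of which satisfies h''(t_α) < 0. Define, for y < y₀ with y in the range of h, p(y) = (1/T) · ∑_{t ∈ [0,T), h(t) = y} 1/|h'(t)|. Then lim_{y → y₀⁻} √(y₀ − y) · p(y) = (1/T) · ∑_{α=1}^m √2 / √|h''(t_α)|. In particular, the density of the sample statistics has a 1/√(y₀ − y) singularity at the maximum value of the waveform (and, symmetrically, at nondegenerate minima). -/

import Mathlib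

open Filter MeasureTheory

lemma deriv_periodic' (h : ℝ → ℝ) (T : ℝ) (hper : ∀ t : ℝ, h (t + T) = h t) (t : ℝ) :
    deriv h (t + T) = deriv h t := by
  have : (fun x => h (x + T)) = h := funext hper
  rw [← deriv_comp_add_const (f := h) (a := T) (x := t), this]

lemma local_sqrt_limit (h : ℝ → ℝ) (hsmooth : ContDiff ℝ 2 h)
    (y₀ t0 : ℝ) (hmax : ∀ t, h t ≤ y₀) (ht0 : h t0 = y₀)
    (hc : deriv (deriv h) t0 < 0) :
    Tendsto (fun t => Real.sqrt (y₀ - h t) / |deriv h t|) (nhdsWithin t0 {t0}ᶜ)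
      (nhds (Real.sqrt (1 / (2 * |deriv (deriv h) t0|)))) := by
  set f := deriv h with hf
  set c := deriv f t0 with hcdef
  have hdh : Differentiable ℝ h := hsmooth.differentiable (by norm_num)
  have hf1 : ContDiff ℝ 1 f := by
    have := (contDiff_succ_iff_deriv (n := 1) (f := h)).mp
      (by exact_mod_cast hsmooth : ContDiff ℝ (1+1) h)
    exact this.2.2
  have hdf : Differentiable ℝ f := hf1.differentiable one_ne_zero
  have hcf' : Continuous (deriv f) := (contDiff_one_iff_deriv.mp hf1).2
  have hf0 : f t0 = 0 := by
    have : IsLocalMax h t0 := Filter.Eventually.of_forall (fun t => ht0 ▸ hmax t)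
    exact this.deriv_eq_zero
  obtain ⟨ρ, hρpos, hρ⟩ : ∃ ρ > 0, ∀ t ∈ Metric.ball t0 ρ, deriv f t < 0 := by
    have := hcf'.continuousAt (x := t0).eventually_lt_const hc
    rcases Metric.eventually_nhds_iff.mp this with ⟨ρ, hρpos, H⟩
    exact ⟨ρ, hρpos, fun t ht => H (Metric.mem_ball.mp ht)⟩
  have hanti : StrictAntiOn f (Metric.ball t0 ρ) := by
    rw [Real.ball_eq_Ioo]
    exact strictAntiOn_of_deriv_neg (convex_Ioo _ _) (hdf.continuous.continuousOn)
      (fun x hx => hρ x (by rw [Real.ball_eq_Ioo]; simpa using interior_subset (s := Set.Ioo _ _) hx))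
  have hfne : ∀ t ∈ Metric.ball t0 ρ, t ≠ t0 → f t ≠ 0 := by
    intro t ht hne
    have ht0mem : t0 ∈ Metric.ball t0 ρ := Metric.mem_ball_self hρpos
    rcases lt_or_gt_of_ne hne with hlt | hgt
    · have := hanti ht ht0mem hlt; rw [hf0] at this; exact ne_of_gt this
    · have := hanti ht0mem ht hgt; rw [hf0] at this; exact ne_of_lt this
  have hballmem : ∀ᶠ t in nhdsWithin t0 {t0}ᶜ, t ∈ Metric.ball t0 ρ ∧ t ≠ t0 := by
    filter_upwards [nhdsWithin_le_nhds (Metric.ball_mem_nhds t0 hρpos), self_mem_nhdsWithin]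
      with t h1 h2
    exact ⟨h1, h2⟩
  have hlhop : Tendsto (fun t => (y₀ - h t) / (f t) ^ 2) (nhdsWithin t0 {t0}ᶜ)
      (nhds (1 / (2 * |c|))) := by
    apply HasDerivAt.lhopital_zero_nhdsNE (f' := fun t => -f t)
      (g' := fun t => 2 * f t ^ 1 * deriv f t)
    · exact Filter.Eventually.of_forall fun t => ((hdh t).hasDerivAt).const_sub y₀
    · exact Filter.Eventually.of_forall fun t => ((hdf t).hasDerivAt).pow 2
    · filter_upwards [hballmem] with t ⟨ht, hne⟩
      have h1 := hfne t ht hne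
      have h2 := (hρ t ht).ne
      positivity
    · apply tendsto_nhdsWithin_of_tendsto_nhds
      have : Tendsto h (nhds t0) (nhds (h t0)) := hdh.continuous.continuousAt
      have := (tendsto_const_nhds (x := y₀)).sub this
      rw [ht0, sub_self] at this; exact this
    · apply tendsto_nhdsWithin_of_tendsto_nhds
      have : Tendsto (fun t => (f t)^2) (nhds t0) (nhds ((f t0)^2)) :=
        ((hdf.continuous.pow 2).continuousAt)
      rw [hf0] at this; simpa using this
    · have hev : ∀ᶠ t in nhdsWithin t0 {t0}ᶜ,
          -f t / (2 * f t ^ 1 * deriv f t) = -(1 / (2 * deriv f t)) := by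
        filter_upwards [hballmem] with t ⟨ht, hne⟩
        have h1 := hfne t ht hne
        have h2 := (hρ t ht).ne
        field_simp
      rw [tendsto_congr' hev]
      have hlim : Tendsto (fun t => -(1 / (2 * deriv f t))) (nhds t0)
          (nhds (-(1 / (2 * c)))) := by
        apply Tendsto.neg
        apply Tendsto.div tendsto_const_nhds
        · exact (tendsto_const_nhds.mul hcf'.continuousAt)
        · exact mul_ne_zero two_ne_zero hc.ne
      have : -(1 / (2 * c)) = 1 / (2 * |c|) := by
        rw [abs_of_neg hc]; field_simp
      rw [this] at hlim
      exact tendsto_nhdsWithin_of_tendsto_nhds hlim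
  have := (Real.continuous_sqrt.continuousAt.tendsto).comp hlhop
  refine Tendsto.congr ?_ this
  intro t
  simp only [Function.comp]
  rw [Real.sqrt_div (by linarith [hmax t] : (0:ℝ) ≤ y₀ - h t), Real.sqrt_sq_eq_abs]

theorem density_singularity_at_maximum
    (h : ℝ → ℝ) (T : ℝ) (hT : 0 < T)
    (hsmooth : ContDiff ℝ 2 h) (hper : ∀ t : ℝ, h (t + T) = h t)
    (hcrit : {t : ℝ | t ∈ Set.Ico (0:ℝ) T ∧ deriv h t = 0}.Finite)
    (y₀ : ℝ) (hmax : ∀ t : ℝ, h t ≤ y₀)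
    (m : ℕ) (hm : 0 < m) (tp : Fin m → ℝ)
    (htp_mem : ∀ α, tp α ∈ Set.Ico (0:ℝ) T)
    (htp_val : ∀ α, h (tp α) = y₀)
    (htp_inj : Function.Injective tp)
    (htp_all : ∀ t ∈ Set.Ico (0:ℝ) T, h t = y₀ → ∃ α, t = tp α)
    (htp_nondeg : ∀ α, deriv (deriv h) (tp α) < 0)
    (p : ℝ → ℝ)
    (hp : ∀ y : ℝ, y < y₀ → y ∈ Set.range h →
      p y = (1 / T) *
        ∑' t : {t : ℝ // t ∈ Set.Ico (0:ℝ) T ∧ h t = y}, 1 / |deriv h (t : ℝ)|) :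
    Tendsto (fun y : ℝ => Real.sqrt (y₀ - y) * p y) (nhdsWithin y₀ (Set.Iio y₀))
      (nhds ((1 / T) *
        ∑ α, Real.sqrt 2 / Real.sqrt |deriv (deriv h) (tp α)|)) := by
  classical
  have hdh : Differentiable ℝ h := hsmooth.differentiable (by norm_num)
  have hch : Continuous h := hdh.continuous
  have hperS : ∀ t : ℝ, h (t - T) = h t := by
    intro t; have := hper (t - T); rw [sub_add_cancel] at this; exact this.symm
  have hfper : ∀ t, deriv h (t + T) = deriv h t := fun t => deriv_periodic' h T hper t
  have hfperS : ∀ t : ℝ, deriv h (t - T) = deriv h t := by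
    intro t; have := hfper (t - T); rw [sub_add_cancel] at this; exact this.symm
  have hf'per : ∀ t, deriv (deriv h) (t + T) = deriv (deriv h) t :=
    fun t => deriv_periodic' (deriv h) T hfper t
  have hf1 : ContDiff ℝ 1 (deriv h) := by
    have := (contDiff_succ_iff_deriv (n := 1) (f := h)).mp
      (by exact_mod_cast hsmooth : ContDiff ℝ (1+1) h)
    exact this.2.2
  have hdf : Differentiable ℝ (deriv h) := hf1.differentiable one_ne_zero
  have hcf : Continuous (deriv h) := hdf.continuous
  have hcf' : Continuous (deriv (deriv h)) := (contDiff_one_iff_deriv.mp hf1).2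
  set α0 : Fin m := ⟨0, hm⟩ with hα0
  haveI : Nonempty (Fin m) := ⟨α0⟩
  -- choose a base point s avoiding the maxima
  obtain ⟨s, hsIoo, hsnr⟩ : ∃ s, s ∈ Set.Ioo (0:ℝ) T ∧ s ∉ Set.range tp := by
    have hinf : (Set.Ioo (0:ℝ) T).Infinite := Set.Ioo_infinite hT
    obtain ⟨s, hs⟩ := (hinf.diff (Set.finite_range tp)).nonempty
    exact ⟨s, hs.1, hs.2⟩
  obtain ⟨hs0, hsT⟩ := hsIoo
  -- representatives of the maxima in (s, s+T)
  set t' : Fin m → ℝ := fun α => if tp α < s then tp α + T else tp α with ht'def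
  have ht'mem : ∀ α, t' α ∈ Set.Ioo s (s + T) := by
    intro α
    obtain ⟨h1, h2⟩ := htp_mem α
    by_cases hc : tp α < s
    · simp only [ht'def, if_pos hc]
      constructor <;> linarith
    · simp only [ht'def, if_neg hc]
      have : s ≠ tp α := fun he => hsnr ⟨α, he.symm⟩
      constructor
      · exact lt_of_le_of_ne (not_lt.mp hc) this
      · linarith
  have ht'h : ∀ α, h (t' α) = y₀ := by
    intro α
    simp only [ht'def]
    by_cases hc : tp α < s
    · rw [if_pos hc, hper, htp_val]
    · rw [if_neg hc, htp_val]
  have ht'c : ∀ α, deriv (deriv h) (t' α) = deriv (deriv h) (tp α) := by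
    intro α
    simp only [ht'def]
    by_cases hc : tp α < s
    · rw [if_pos hc, hf'per]
    · rw [if_neg hc]
  have ht'neg : ∀ α, deriv (deriv h) (t' α) < 0 := fun α => (ht'c α) ▸ htp_nondeg α
  have ht'inj : Function.Injective t' := by
    intro α β hab
    simp only [ht'def] at hab
    by_cases ha : tp α < s <;> by_cases hb : tp β < s
    · rw [if_pos ha, if_pos hb] at hab; exact htp_inj (by linarith)
    · rw [if_pos ha, if_neg hb] at hab
      have := (htp_mem β).2; have := (htp_mem α).1; exfalso; linarith
    · rw [if_neg ha, if_pos hb] at hab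
      have := (htp_mem α).2; have := (htp_mem β).1; exfalso; linarith
    · rw [if_neg ha, if_neg hb] at hab; exact htp_inj hab
  -- radii where the second derivative is negative
  have hρex : ∀ α, ∃ ρ > 0, ∀ u, |u - t' α| < ρ → deriv (deriv h) u < 0 := by
    intro α
    have := hcf'.continuousAt (x := t' α) |>.eventually_lt_const (ht'neg α)
    rcases Metric.eventually_nhds_iff.mp this with ⟨ρ, hρpos, H⟩
    exact ⟨ρ, hρpos, fun u hu => H (by rwa [Real.dist_eq])⟩
  choose ρ hρpos hρneg using hρex
  -- the margin δ
  set F : Fin m → Finset ℝ :=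
    fun α => insert s (insert (s + T) ((Finset.univ.image t').erase (t' α))) with hFdef
  have hFne : ∀ α, (F α).Nonempty := fun α => ⟨s, by simp [hFdef]⟩
  set e : Fin m → ℝ := fun α => (F α).inf' (hFne α) (fun x => |t' α - x|) with hedef
  have hepos : ∀ α, 0 < e α := by
    intro α
    rw [hedef]
    apply (Finset.lt_inf'_iff _).mpr
    intro x hx
    simp only [hFdef, Finset.mem_insert, Finset.mem_erase, Finset.mem_image] at hx
    have hxne : t' α ≠ x := by
      rcases hx with rfl | rfl | ⟨hne, _⟩
      · exact ne_of_gt (ht'mem α).1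
      · exact ne_of_lt (ht'mem α).2
      · exact (Ne.symm hne)
    exact abs_pos.mpr (sub_ne_zero.mpr hxne)
  have hele : ∀ α x, x ∈ F α → e α ≤ |t' α - x| := by
    intro α x hx
    exact Finset.inf'_le _ hx
  set δ : ℝ := Finset.univ.inf' Finset.univ_nonempty (fun α => min (e α / 2) (ρ α / 2))
    with hδdef
  have hδpos : 0 < δ := by
    rw [hδdef]
    apply (Finset.lt_inf'_iff _).mpr
    intro α _
    exact lt_min (by linarith [hepos α]) (by linarith [hρpos α])
  have hδle : ∀ α, 2 * δ ≤ e α ∧ δ < ρ α := by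
    intro α
    have : δ ≤ min (e α / 2) (ρ α / 2) :=
      Finset.inf'_le _ (Finset.mem_univ α)
    constructor
    · have := this.trans (min_le_left _ _); linarith
    · have := this.trans (min_le_right _ _); linarith [hρpos α]
  have hsep : ∀ α β, α ≠ β → 2 * δ ≤ |t' α - t' β| := by
    intro α β hne
    refine (hδle α).1.trans (hele α (t' β) ?_)
    simp only [hFdef, Finset.mem_insert, Finset.mem_erase, Finset.mem_image]
    right; right
    exact ⟨fun he => hne (ht'inj he).symm |>.elim, ⟨β, Finset.mem_univ β, rfl⟩⟩
  have hgapL : ∀ α, s + δ ≤ t' α - δ := by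
    intro α
    have h1 : 2 * δ ≤ |t' α - s| := (hδle α).1.trans (hele α s (by simp [hFdef]))
    have h2 : 0 < t' α - s := by linarith [(ht'mem α).1]
    rw [abs_of_pos h2] at h1; linarith
  have hgapR : ∀ α, t' α + δ ≤ s + T - δ := by
    intro α
    have h1 : 2 * δ ≤ |t' α - (s + T)| := (hδle α).1.trans (hele α (s+T) (by simp [hFdef]))
    have h2 : t' α - (s + T) < 0 := by linarith [(ht'mem α).2]
    rw [abs_of_neg h2] at h1; linarith
  -- monotonicity structure near each maximum
  have hf'neg : ∀ α, ∀ u ∈ Set.Ioo (t' α - δ) (t' α + δ), deriv (deriv h) u < 0 := by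
    intro α u hu
    apply hρneg α
    rw [abs_sub_comm, abs_lt]
    constructor <;> [linarith [hu.2, (hδle α).2]; linarith [hu.1, (hδle α).2]]
  have hfanti : ∀ α, StrictAntiOn (deriv h) (Set.Icc (t' α - δ) (t' α + δ)) := by
    intro α
    apply strictAntiOn_of_deriv_neg (convex_Icc _ _) hcf.continuousOn
    intro u hu
    rw [interior_Icc] at hu
    exact hf'neg α u hu
  have hf0 : ∀ α, deriv h (t' α) = 0 := by
    intro α
    have : IsLocalMax h (t' α) :=
      Filter.Eventually.of_forall (fun t => (ht'h α) ▸ hmax t)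
    exact this.deriv_eq_zero
  have ht'Icc : ∀ α, t' α ∈ Set.Icc (t' α - δ) (t' α + δ) := by
    intro α; constructor <;> linarith [hδpos]
  have hfpos : ∀ α, ∀ u ∈ Set.Icc (t' α - δ) (t' α), u ≠ t' α → 0 < deriv h u := by
    intro α u hu hne
    have h1 : u ∈ Set.Icc (t' α - δ) (t' α + δ) := ⟨hu.1, by linarith [hu.2, hδpos]⟩
    have := hfanti α h1 (ht'Icc α) (lt_of_le_of_ne hu.2 hne)
    rw [hf0 α] at this; exact this
  have hfneg : ∀ α, ∀ u ∈ Set.Icc (t' α) (t' α + δ), u ≠ t' α → deriv h u < 0 := by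
    intro α u hu hne
    have h1 : u ∈ Set.Icc (t' α - δ) (t' α + δ) := ⟨by linarith [hu.1, hδpos], hu.2⟩
    have := hfanti α (ht'Icc α) h1 (lt_of_le_of_ne hu.1 (Ne.symm hne))
    rw [hf0 α] at this; exact this
  have hmono : ∀ α, StrictMonoOn h (Set.Icc (t' α - δ) (t' α)) := by
    intro α
    apply strictMonoOn_of_deriv_pos (convex_Icc _ _) hch.continuousOn
    intro u hu
    rw [interior_Icc] at hu
    exact hfpos α u ⟨hu.1.le, hu.2.le⟩ (ne_of_lt hu.2)
  have hanti : ∀ α, StrictAntiOn h (Set.Icc (t' α) (t' α + δ)) := by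
    intro α
    apply strictAntiOn_of_deriv_neg (convex_Icc _ _) hch.continuousOn
    intro u hu
    rw [interior_Icc] at hu
    exact hfneg α u ⟨hu.1.le, hu.2.le⟩ (ne_of_gt hu.1)
  have hloL : ∀ α, h (t' α - δ) < y₀ := by
    intro α
    have := hmono α ⟨le_rfl, by linarith [hδpos]⟩ ⟨by linarith [hδpos], le_rfl⟩
      (by linarith [hδpos])
    rwa [ht'h α] at this
  have hloR : ∀ α, h (t' α + δ) < y₀ := by
    intro α
    have := hanti α ⟨le_rfl, by linarith [hδpos]⟩ ⟨by linarith [hδpos], le_rfl⟩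
      (by linarith [hδpos])
    rwa [ht'h α] at this
  -- the compact complement and its maximum
  set K : Set ℝ := Set.Icc s (s + T) \ ⋃ α, Set.Ioo (t' α - δ) (t' α + δ) with hKdef
  have hKcomp : IsCompact K := isCompact_Icc.diff (isOpen_iUnion fun α => isOpen_Ioo)
  have hsK : s ∈ K := by
    constructor
    · exact ⟨le_rfl, by linarith⟩
    · simp only [Set.mem_iUnion, Set.mem_Ioo, not_exists]
      intro α hc
      have := hgapL α
      linarith [hc.1, hδpos]
  obtain ⟨z, hzK, hzmax'⟩ := hKcomp.exists_isMaxOn ⟨s, hsK⟩ hch.continuousOn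
  have hzmax : ∀ u ∈ K, h u ≤ h z := fun u hu => hzmax' hu
  have hzlt : h z < y₀ := by
    refine lt_of_le_of_ne (hmax z) (fun hzy => ?_)
    obtain ⟨hzIcc, hznot⟩ := hzK
    set w : ℝ := if z < T then z else z - T with hwdef
    have hwmem : w ∈ Set.Ico (0:ℝ) T := by
      rw [hwdef]
      by_cases hc : z < T
      · rw [if_pos hc]; exact ⟨by linarith [hzIcc.1], hc⟩
      · rw [if_neg hc]; constructor <;> [linarith [not_lt.mp hc]; linarith [hzIcc.2]]
    have hwy : h w = y₀ := by
      rw [hwdef]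
      by_cases hc : z < T
      · rw [if_pos hc]; exact hzy
      · rw [if_neg hc, hperS]; exact hzy
    obtain ⟨α, hα⟩ := htp_all w hwmem hwy
    have hzcase : z = w ∨ z = w + T := by
      rw [hwdef]
      by_cases hc : z < T
      · left; rw [if_pos hc]
      · right; rw [if_neg hc]; ring
    apply hznot
    rw [Set.mem_iUnion]
    refine ⟨α, ?_⟩
    have hzt : z = t' α := by
      simp only [ht'def]
      by_cases hc : tp α < s
      · rw [if_pos hc]
        rcases hzcase with hz1 | hz2
        · exfalso
          have h1 := hzIcc.1
          rw [hz1, hα] at h1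
          linarith
        · rw [hz2, hα]
      · rw [if_neg hc]
        rcases hzcase with hz1 | hz2
        · rw [hz1, hα]
        · exfalso
          have hge : s ≤ tp α := not_lt.mp hc
          have : s ≠ tp α := fun he => hsnr ⟨α, he.symm⟩
          rw [hz2, hα] at hzIcc
          linarith [hzIcc.2, lt_of_le_of_ne hge this]
    rw [hzt]
    exact ⟨by linarith [hδpos], by linarith [hδpos]⟩
  -- the threshold y₁
  set y₁ : ℝ := max (h z)
    (Finset.univ.sup' Finset.univ_nonempty
      (fun α => max (h (t' α - δ)) (h (t' α + δ)))) with hy₁def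
  have hy₁lt : y₁ < y₀ := by
    rw [hy₁def]
    apply max_lt hzlt
    apply (Finset.sup'_lt_iff _).mpr
    intro α _
    exact max_lt (hloL α) (hloR α)
  have hy₁geL : ∀ α, h (t' α - δ) ≤ y₁ := by
    intro α
    refine le_max_of_le_right ?_
    exact le_trans (le_max_left _ _)
      (Finset.le_sup' (fun α => max (h (t' α - δ)) (h (t' α + δ))) (Finset.mem_univ α))
  have hy₁geR : ∀ α, h (t' α + δ) ≤ y₁ := by
    intro α
    refine le_max_of_le_right ?_
    exact le_trans (le_max_right _ _)
      (Finset.le_sup' (fun α => max (h (t' α - δ)) (h (t' α + δ))) (Finset.mem_univ α))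
  have hy₁gez : h z ≤ y₁ := le_max_left _ _
  have hcover : ∀ u ∈ Set.Icc s (s + T), y₁ < h u →
      ∃ α, u ∈ Set.Ioo (t' α - δ) (t' α + δ) := by
    intro u huIcc hugt
    by_contra hnot
    push_neg at hnot
    have huK : u ∈ K := by
      refine ⟨huIcc, ?_⟩
      simp only [Set.mem_iUnion, not_exists]
      exact fun α => hnot α
    have := hzmax u huK
    linarith [hy₁gez]
  -- the two branch inverse functions
  have hivtA : ∀ α (y : ℝ), ∃ u, u ∈ Set.Icc (t' α - δ) (t' α) ∧
      h u = min y₀ (max (h (t' α - δ)) y) := by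
    intro α y
    have hm1 : min y₀ (max (h (t' α - δ)) y) ∈ Set.Icc (h (t' α - δ)) (h (t' α)) := by
      constructor
      · exact le_min (hmax _) (le_max_left _ _)
      · rw [ht'h α]; exact min_le_left _ _
    have := intermediate_value_Icc (by linarith [hδpos] : t' α - δ ≤ t' α)
      hch.continuousOn hm1
    obtain ⟨u, hu1, hu2⟩ := this
    exact ⟨u, hu1, hu2⟩
  have hivtB : ∀ α (y : ℝ), ∃ u, u ∈ Set.Icc (t' α) (t' α + δ) ∧
      h u = min y₀ (max (h (t' α + δ)) y) := by
    intro α y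
    have hm1 : min y₀ (max (h (t' α + δ)) y) ∈ Set.Icc (h (t' α + δ)) (h (t' α)) := by
      constructor
      · exact le_min (hmax _) (le_max_left _ _)
      · rw [ht'h α]; exact min_le_left _ _
    have := intermediate_value_Icc' (by linarith [hδpos] : t' α ≤ t' α + δ)
      hch.continuousOn hm1
    obtain ⟨u, hu1, hu2⟩ := this
    exact ⟨u, hu1, hu2⟩
  choose a haIcc haval using hivtA
  choose b hbIcc hbval using hivtB
  have hay : ∀ α, ∀ y ∈ Set.Ioo y₁ y₀, h (a α y) = y := by
    intro α y hy
    rw [haval α y, max_eq_right (le_of_lt (lt_of_le_of_lt (hy₁geL α) hy.1)),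
      min_eq_right hy.2.le]
  have hby : ∀ α, ∀ y ∈ Set.Ioo y₁ y₀, h (b α y) = y := by
    intro α y hy
    rw [hbval α y, max_eq_right (le_of_lt (lt_of_le_of_lt (hy₁geR α) hy.1)),
      min_eq_right hy.2.le]
  have haIoo : ∀ α, ∀ y ∈ Set.Ioo y₁ y₀, a α y ∈ Set.Ioo (t' α - δ) (t' α) := by
    intro α y hy
    obtain ⟨h1, h2⟩ := haIcc α y
    constructor
    · rcases eq_or_lt_of_le h1 with he | hlt
      · exfalso
        have := hay α y hy
        rw [← he] at this
        linarith [lt_of_le_of_lt (hy₁geL α) hy.1]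
      · exact hlt
    · rcases eq_or_lt_of_le h2 with he | hlt
      · exfalso
        have := hay α y hy
        rw [he, ht'h α] at this
        linarith [hy.2]
      · exact hlt
  have hbIoo : ∀ α, ∀ y ∈ Set.Ioo y₁ y₀, b α y ∈ Set.Ioo (t' α) (t' α + δ) := by
    intro α y hy
    obtain ⟨h1, h2⟩ := hbIcc α y
    constructor
    · rcases eq_or_lt_of_le h1 with he | hlt
      · exfalso
        have := hby α y hy
        rw [← he, ht'h α] at this
        linarith [hy.2]
      · exact hlt
    · rcases eq_or_lt_of_le h2 with he | hlt
      · exfalso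
        have := hby α y hy
        rw [he] at this
        linarith [lt_of_le_of_lt (hy₁geR α) hy.1]
      · exact hlt
  have huniqA : ∀ α, ∀ y ∈ Set.Ioo y₁ y₀, ∀ u ∈ Set.Icc (t' α - δ) (t' α),
      h u = y → u = a α y := by
    intro α y hy u hu huy
    exact (hmono α).injOn hu (haIcc α y) (by rw [huy, hay α y hy])
  have huniqB : ∀ α, ∀ y ∈ Set.Ioo y₁ y₀, ∀ u ∈ Set.Icc (t' α) (t' α + δ),
      h u = y → u = b α y := by
    intro α y hy u hu huy
    exact (hanti α).injOn hu (hbIcc α y) (by rw [huy, hby α y hy])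
  -- tendsto of the branch inverses
  have haTend : ∀ α, Tendsto (fun y => a α y) (nhdsWithin y₀ (Set.Iio y₀))
      (nhdsWithin (t' α) {t' α}ᶜ) := by
    intro α
    rw [tendsto_nhdsWithin_iff]
    constructor
    · rw [Metric.tendsto_nhds]
      intro ε hε
      have hε'pos : 0 < min ε δ := lt_min hε hδpos
      have hε'le : min ε δ ≤ δ := min_le_right _ _
      have hε'leε : min ε δ ≤ ε := min_le_left _ _
      have hcut : max y₁ (h (t' α - min ε δ)) < y₀ := by
        apply max_lt hy₁lt
        have : h (t' α - min ε δ) < h (t' α) :=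
          hmono α ⟨by linarith, by linarith⟩ ⟨by linarith [hδpos], le_rfl⟩ (by linarith)
        rwa [ht'h α] at this
      filter_upwards [Ioo_mem_nhdsLT
        hcut] with y hy
      have hyIoo : y ∈ Set.Ioo y₁ y₀ := ⟨lt_of_le_of_lt (le_max_left _ _) hy.1, hy.2⟩
      have h1 : t' α - min ε δ < a α y := by
        by_contra hle
        push_neg at hle
        have hmem1 : a α y ∈ Set.Icc (t' α - δ) (t' α) := haIcc α y
        have hmem2 : t' α - min ε δ ∈ Set.Icc (t' α - δ) (t' α) := ⟨by linarith, by linarith⟩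
        have hle2 := (hmono α).monotoneOn hmem1 hmem2 hle
        rw [hay α y hyIoo] at hle2
        have := lt_of_le_of_lt (le_max_right y₁ (h (t' α - min ε δ))) hy.1
        linarith
      have h2 : a α y < t' α := (haIoo α y hyIoo).2
      rw [Real.dist_eq, abs_lt]
      constructor <;> linarith
    · filter_upwards [Ioo_mem_nhdsLT hy₁lt] with y hy
      exact Set.mem_compl_singleton_iff.mpr (ne_of_lt (haIoo α y hy).2)
  have hbTend : ∀ α, Tendsto (fun y => b α y) (nhdsWithin y₀ (Set.Iio y₀))
      (nhdsWithin (t' α) {t' α}ᶜ) := by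
    intro α
    rw [tendsto_nhdsWithin_iff]
    constructor
    · rw [Metric.tendsto_nhds]
      intro ε hε
      have hε'pos : 0 < min ε δ := lt_min hε hδpos
      have hε'le : min ε δ ≤ δ := min_le_right _ _
      have hε'leε : min ε δ ≤ ε := min_le_left _ _
      have hcut : max y₁ (h (t' α + min ε δ)) < y₀ := by
        apply max_lt hy₁lt
        have : h (t' α + min ε δ) < h (t' α) :=
          hanti α ⟨le_rfl, by linarith [hδpos]⟩ ⟨by linarith, by linarith⟩ (by linarith)
        rwa [ht'h α] at this
      filter_upwards [Ioo_mem_nhdsLT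
        hcut] with y hy
      have hyIoo : y ∈ Set.Ioo y₁ y₀ := ⟨lt_of_le_of_lt (le_max_left _ _) hy.1, hy.2⟩
      have h1 : b α y < t' α + min ε δ := by
        by_contra hle
        push_neg at hle
        have hmem1 : b α y ∈ Set.Icc (t' α) (t' α + δ) := hbIcc α y
        have hmem2 : t' α + min ε δ ∈ Set.Icc (t' α) (t' α + δ) := ⟨by linarith, by linarith⟩
        have hle2 := (hanti α).antitoneOn hmem2 hmem1 hle
        rw [hby α y hyIoo] at hle2
        have := lt_of_le_of_lt (le_max_right y₁ (h (t' α + min ε δ))) hy.1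
        linarith
      have h2 : t' α < b α y := (hbIoo α y hyIoo).1
      rw [Real.dist_eq, abs_lt]
      constructor <;> linarith
    · filter_upwards [Ioo_mem_nhdsLT hy₁lt] with y hy
      exact Set.mem_compl_singleton_iff.mpr (ne_of_gt (hbIoo α y hy).1)
  -- per-branch limits
  set G : ℝ → ℝ := fun u => Real.sqrt (y₀ - h u) / |deriv h u| with hGdef
  set L : Fin m → ℝ := fun α => Real.sqrt (1 / (2 * |deriv (deriv h) (t' α)|)) with hLdef
  have hGa : ∀ α, Tendsto (fun y => G (a α y)) (nhdsWithin y₀ (Set.Iio y₀)) (nhds (L α)) :=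
    fun α => (local_sqrt_limit h hsmooth y₀ (t' α) hmax (ht'h α) (ht'neg α)).comp (haTend α)
  have hGb : ∀ α, Tendsto (fun y => G (b α y)) (nhdsWithin y₀ (Set.Iio y₀)) (nhds (L α)) :=
    fun α => (local_sqrt_limit h hsmooth y₀ (t' α) hmax (ht'h α) (ht'neg α)).comp (hbTend α)
  -- wrap-around map
  set wr : ℝ → ℝ := fun u => if u < T then u else u - T with hwrdef
  have hwr : ∀ u ∈ Set.Ioo s (s + T), wr u ∈ Set.Ico (0:ℝ) T ∧ h (wr u) = h u ∧
      |deriv h (wr u)| = |deriv h u| := by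
    intro u hu
    simp only [hwrdef]
    by_cases hc : u < T
    · rw [if_pos hc]; exact ⟨⟨by linarith [hu.1], hc⟩, rfl, rfl⟩
    · rw [if_neg hc]
      exact ⟨⟨by linarith [not_lt.mp hc], by linarith [hu.2]⟩, hperS u, by rw [hfperS]⟩
  have haIooS : ∀ α, ∀ y ∈ Set.Ioo y₁ y₀, a α y ∈ Set.Ioo s (s + T) := by
    intro α y hy
    obtain ⟨h1, h2⟩ := haIoo α y hy
    exact ⟨by linarith [hgapL α, hδpos], by linarith [(ht'mem α).2]⟩
  have hbIooS : ∀ α, ∀ y ∈ Set.Ioo y₁ y₀, b α y ∈ Set.Ioo s (s + T) := by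
    intro α y hy
    obtain ⟨h1, h2⟩ := hbIoo α y hy
    exact ⟨by linarith [(ht'mem α).1], by linarith [hgapR α, hδpos]⟩
  -- the sum identity
  have hsum : ∀ y ∈ Set.Ioo y₁ y₀,
      (∑' t : {t : ℝ // t ∈ Set.Ico (0:ℝ) T ∧ h t = y}, 1 / |deriv h (t:ℝ)|)
        = ∑ α, (1 / |deriv h (a α y)| + 1 / |deriv h (b α y)|) := by
    intro y hy
    set u : Fin m × Bool → ℝ := fun q => if q.2 then b q.1 y else a q.1 y with hudef
    have huIooS : ∀ q, u q ∈ Set.Ioo s (s + T) := by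
      rintro ⟨α, bb⟩
      cases bb
      · simpa [hudef] using haIooS α y hy
      · simpa [hudef] using hbIooS α y hy
    have huh : ∀ q, h (u q) = y := by
      rintro ⟨α, bb⟩
      cases bb
      · simpa [hudef] using hay α y hy
      · simpa [hudef] using hby α y hy
    have hua : ∀ α, u (α, false) = a α y := fun α => by simp [hudef]
    have hub : ∀ α, u (α, true) = b α y := fun α => by simp [hudef]
    have huIv : ∀ q, u q ∈ Set.Ioo (t' q.1 - δ) (t' q.1 + δ) := by
      rintro ⟨α, bb⟩
      cases bb
      · have h1 := haIoo α y hy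
        rw [hua α]
        exact ⟨h1.1, by linarith [h1.2, hδpos]⟩
      · have h1 := hbIoo α y hy
        rw [hub α]
        exact ⟨by linarith [h1.1, hδpos], h1.2⟩
    have huinj : Function.Injective u := by
      intro q1 q2 he
      have hfst : q1.1 = q2.1 := by
        by_contra hne
        have hs2 := hsep q1.1 q2.1 hne
        have d1 := huIv q1
        have d2 := huIv q2
        have h3 : |t' q1.1 - t' q2.1| ≤ |t' q1.1 - u q1| + |u q1 - t' q2.1| :=
          abs_sub_le _ _ _
        have h4 : |t' q1.1 - u q1| < δ := by
          rw [abs_lt]; constructor <;> [linarith [d1.2]; linarith [d1.1]]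
        have h5 : |u q1 - t' q2.1| < δ := by
          rw [he, abs_lt]; constructor <;> [linarith [d2.1]; linarith [d2.2]]
        linarith
      obtain ⟨α1, b1⟩ := q1
      obtain ⟨α2, b2⟩ := q2
      simp only at hfst
      subst hfst
      cases b1 <;> cases b2
      · rfl
      · exfalso
        rw [hua α1, hub α1] at he
        linarith [(haIoo α1 y hy).2, (hbIoo α1 y hy).1, he.le]
      · exfalso
        rw [hua α1, hub α1] at he
        linarith [(haIoo α1 y hy).2, (hbIoo α1 y hy).1, he.le]
      · rfl
    have hWinj : Function.Injective (fun q => wr (u q)) := by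
      intro q1 q2 he
      apply huinj
      have h1 := huIooS q1
      have h2 := huIooS q2
      simp only [hwrdef] at he
      by_cases c1 : u q1 < T <;> by_cases c2 : u q2 < T
      · rwa [if_pos c1, if_pos c2] at he
      · rw [if_pos c1, if_neg c2] at he
        exfalso; linarith [h1.1, h2.2]
      · rw [if_neg c1, if_pos c2] at he
        exfalso; linarith [h2.1, h1.2]
      · rw [if_neg c1, if_neg c2] at he; linarith
    have hrange : ∀ t : ℝ, (t ∈ Set.Ico (0:ℝ) T ∧ h t = y) ↔
        ∃ q : Fin m × Bool, wr (u q) = t := by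
      intro t
      constructor
      · rintro ⟨htIco, hty⟩
        have hvIcc : (if t < s then t + T else t) ∈ Set.Icc s (s + T) := by
          by_cases hc : t < s
          · rw [if_pos hc]
            exact ⟨by linarith [htIco.1, hsT], by linarith⟩
          · rw [if_neg hc]
            exact ⟨not_lt.mp hc, by linarith [htIco.2, hs0]⟩
        have hvh : h (if t < s then t + T else t) = y := by
          by_cases hc : t < s
          · rw [if_pos hc, hper, hty]
          · rw [if_neg hc, hty]
        obtain ⟨α, hαv⟩ := hcover _ hvIcc (by rw [hvh]; exact hy.1)
        have hwrv : wr (if t < s then t + T else t) = t := by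
          simp only [hwrdef]
          by_cases hc : t < s
          · rw [if_pos hc, if_neg (by linarith [htIco.1] : ¬ t + T < T)]; ring
          · rw [if_neg hc, if_pos htIco.2]
        have hvne : (if t < s then t + T else t) ≠ t' α := by
          intro he
          rw [he, ht'h α] at hvh
          linarith [hy.2]
        rcases lt_or_gt_of_ne hvne with hlt | hgt
        · have hva : (if t < s then t + T else t) = a α y :=
            huniqA α y hy _ ⟨hαv.1.le, hlt.le⟩ hvh
          refine ⟨(α, false), ?_⟩
          rw [hua α, ← hva, hwrv]
        · have hvb : (if t < s then t + T else t) = b α y :=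
            huniqB α y hy _ ⟨hgt.le, hαv.2.le⟩ hvh
          refine ⟨(α, true), ?_⟩
          rw [hub α, ← hvb, hwrv]
      · rintro ⟨q, rfl⟩
        obtain ⟨hm1, hm2, _⟩ := hwr (u q) (huIooS q)
        exact ⟨hm1, by rw [hm2, huh q]⟩
    have hgval : ∀ q : Fin m × Bool, 1 / |deriv h (wr (u q))| = 1 / |deriv h (u q)| :=
      fun q => by rw [(hwr (u q) (huIooS q)).2.2]
    let E : (Fin m × Bool) ≃ {t : ℝ // t ∈ Set.Ico (0:ℝ) T ∧ h t = y} :=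
      Equiv.ofBijective (fun q => ⟨wr (u q), ((hrange (wr (u q))).mpr ⟨q, rfl⟩)⟩)
        ⟨fun q1 q2 he => hWinj (congrArg Subtype.val he),
         by
          rintro ⟨t, ht⟩
          obtain ⟨q, hq⟩ := (hrange t).mp ht
          exact ⟨q, Subtype.ext hq⟩⟩
    rw [← Equiv.tsum_eq E (fun t : {t : ℝ // t ∈ Set.Ico (0:ℝ) T ∧ h t = y} =>
      1 / |deriv h (t:ℝ)|)]
    rw [tsum_fintype]
    rw [Fintype.sum_prod_type]
    apply Finset.sum_congr rfl
    intro α _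
    rw [Fintype.sum_bool]
    have e1 : ((E (α, true) : {t : ℝ // t ∈ Set.Ico (0:ℝ) T ∧ h t = y}) : ℝ) = wr (u (α, true)) := rfl
    have e2 : ((E (α, false) : {t : ℝ // t ∈ Set.Ico (0:ℝ) T ∧ h t = y}) : ℝ) = wr (u (α, false)) := rfl
    rw [e1, e2, hgval, hgval]
    rw [hua α, hub α, add_comm]
  -- eventual identity
  have hyr : ∀ y ∈ Set.Ioo y₁ y₀, y ∈ Set.range h := fun y hy => ⟨a α0 y, hay α0 y hy⟩
  have hkey : ∀ᶠ y in nhdsWithin y₀ (Set.Iio y₀),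
      Real.sqrt (y₀ - y) * p y = (1 / T) * ∑ α, (G (a α y) + G (b α y)) := by
    filter_upwards [Ioo_mem_nhdsLT hy₁lt] with y hy
    rw [hp y hy.2 (hyr y hy), hsum y hy]
    rw [← mul_assoc, mul_comm (Real.sqrt (y₀ - y)) (1/T), mul_assoc, Finset.mul_sum]
    congr 1
    apply Finset.sum_congr rfl
    intro α _
    rw [mul_add]
    congr 1
    · simp only [hGdef]
      rw [hay α y hy, mul_one_div]
    · simp only [hGdef]
      rw [hby α y hy, mul_one_div]
  have hfinal : Tendsto (fun y => (1 / T) * ∑ α, (G (a α y) + G (b α y)))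
      (nhdsWithin y₀ (Set.Iio y₀)) (nhds ((1 / T) * ∑ α, (L α + L α))) := by
    apply Tendsto.const_mul
    exact tendsto_finset_sum _ (fun α _ => (hGa α).add (hGb α))
  have hLsum : ∑ α, (L α + L α) = ∑ α, Real.sqrt 2 / Real.sqrt |deriv (deriv h) (tp α)| := by
    apply Finset.sum_congr rfl
    intro α _
    simp only [hLdef]
    rw [← ht'c α]
    have hcneg : deriv (deriv h) (t' α) < 0 := ht'neg α
    have hcpos : 0 < |deriv (deriv h) (t' α)| := abs_pos.mpr hcneg.ne
    set c := |deriv (deriv h) (t' α)| with hcdef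
    have h4 : Real.sqrt (1 / (2 * c)) + Real.sqrt (1 / (2 * c))
        = Real.sqrt (4 * (1 / (2 * c))) := by
      rw [Real.sqrt_mul (by norm_num : (0:ℝ) ≤ 4),
        show Real.sqrt 4 = 2 by
          rw [show (4:ℝ) = 2^2 by norm_num, Real.sqrt_sq (by norm_num : (0:ℝ) ≤ 2)]]
      ring
    rw [h4, show 4 * (1 / (2 * c)) = 2 / c by field_simp; ring,
      Real.sqrt_div (by norm_num : (0:ℝ) ≤ 2)]
  rw [← hLsum]
  exact Tendsto.congr' (hkey.mono fun y hy => hy.symm) hfinal
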